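/- Let P be a potential graph with barrier digraph V, let F ∈ F̃^k be a minimal spanning entering forest of V with k ≥ 2 trees, and define the enlarged barrier digraph V^k on the root set K_F by v^k_{li} = min { p_{qr} : q ∈ V(T^F_l), r ∈ V(T^F_i), (q,r) an edge of P } − p_{ll} for l ≠ i (no arc (l,i) if no such edge of P exists). Suppose (y,x) is a minimum-weight arc of V^k and (a,b) is an edge of P with a ∈ V(T^F_y), b ∈ V(T^F_x) and p_{ab} = min { p_{qr} : q ∈ V(T^F_y), r ∈ V(T^F_x), (q,r) an edge of P }. Let G be the spanning entering forest obtained from F by reorienting the tree T^F_y so that its root becomes a and adding the arc (a,b). Then G ∈ F̃^{k−1} ∩ R^F_y, and Υ^G = Υ^F + p_{ab} − p_{yy}. -/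

import Mathlib

open scoped Classical

namespace BarrierForests

variable {α : Type*} [Fintype α] [DecidableEq α]

/-- Total weight of a set of arcs. -/
def aweight (v : α → α → ℝ) (A : Finset (α × α)) : ℝ := ∑ a ∈ A, v a.1 a.2

/-- Weight `Υ^A_S` of the arcs of `A` whose tail lies in `S`. -/
def aweightOn (v : α → α → ℝ) (A : Finset (α × α)) (S : Finset α) : ℝ :=
  ∑ a ∈ A.filter (fun a => a.1 ∈ S), v a.1 a.2

/-- The relation "there is an arc from `i` to `j` in `A`". -/
def arcRel (A : Finset (α × α)) : α → α → Prop := fun i j => (i, j) ∈ A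

/-- Entering forest: every vertex has out-degree at most one, and there are no
directed cycles. -/
def IsEForest (A : Finset (α × α)) : Prop :=
  (∀ i j j', (i, j) ∈ A → (i, j') ∈ A → j = j') ∧
  ∀ i, ¬ Relation.TransGen (arcRel A) i i

/-- Roots of a (spanning) entering forest: the vertices with no outgoing arc. -/
noncomputable def rootSet (A : Finset (α × α)) : Finset α :=
  Finset.univ.filter fun i => ∀ j, (i, j) ∉ A

/-- `𝓕^k`: spanning entering forests of the digraph with arc set `E`
having exactly `k` trees (equivalently, `k` roots). -/
def FSet (E : Finset (α × α)) (k : ℕ) : Set (Finset (α × α)) :=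
  {A | A ⊆ E ∧ IsEForest A ∧ (rootSet A).card = k}

/-- The infimum (in `EReal`, so `⊤` for the empty family) of the `w`-weights of the
members of `s`. -/
noncomputable def minW {β : Type*} (s : Set β) (w : β → ℝ) : EReal :=
  sInf ((fun x => (w x : EReal)) '' s)

/-- `φ^k`: minimum weight of a spanning entering forest with `k` trees. -/
noncomputable def phi (v : α → α → ℝ) (E : Finset (α × α)) (k : ℕ) : EReal :=
  minW (FSet E k) (aweight v)

/-- `F ∈ 𝓕̃^k`: minimal spanning entering forest with `k` trees. -/
def IsMinForest (v : α → α → ℝ) (E : Finset (α × α)) (k : ℕ) (F : Finset (α × α)) : Prop :=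
  F ∈ FSet E k ∧ (aweight v F : EReal) = phi v E k

/-- Vertex set of the tree `T^F_i` of the entering forest `F` rooted at `i`:
all vertices from which `i` is reachable. -/
noncomputable def treeVerts (F : Finset (α × α)) (i : α) : Finset α :=
  Finset.univ.filter fun j => Relation.ReflTransGen (arcRel F) j i

/-- Arc set of the tree `T^F_i`. -/
noncomputable def treeArcs (F : Finset (α × α)) (i : α) : Finset (α × α) :=
  F.filter fun a => a.1 ∈ treeVerts F i

/-- Induced subgraph (restriction) of the arc set `A` on the vertex set `S`. -/
def restrictArcs (A : Finset (α × α)) (S : Finset α) : Finset (α × α) :=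
  A.filter fun a => a.1 ∈ S ∧ a.2 ∈ S

/-- `T ∈ 𝓣^{•q}_S`: `T` is an entering tree that is a subgraph of the digraph with
arc set `E`, with vertex set `S` and root `q`. -/
def IsTreeOn (E T : Finset (α × α)) (S : Finset α) (q : α) : Prop :=
  q ∈ S ∧ T ⊆ E ∧ (∀ a ∈ T, a.1 ∈ S ∧ a.2 ∈ S) ∧
  (∀ i ∈ S, i ≠ q → ∃! j, (i, j) ∈ T) ∧
  (∀ j, (q, j) ∉ T) ∧
  ∀ i ∈ S, Relation.ReflTransGen (arcRel T) i q

/-- `λ^{•q}_S`. -/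
noncomputable def lamB (v : α → α → ℝ) (E : Finset (α × α)) (S : Finset α) (q : α) : EReal :=
  minW {T | IsTreeOn E T S q} (aweight v)

/-- `λ^•_S = min_{q ∈ S} λ^{•q}_S`. -/
noncomputable def lamBul (v : α → α → ℝ) (E : Finset (α × α)) (S : Finset α) : EReal :=
  minW {T | ∃ q ∈ S, IsTreeOn E T S q} (aweight v)

/-- `T ∈ 𝓣^{∘q}_S`: `T` has `|S| + 1` vertices, `T|_S` is an entering tree with vertex
set `S` and root `q`, and the single arc of `T` leaving `S` goes from `q` to the root
`r ∉ S` of `T`. -/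
def IsCTreeOn (E T : Finset (α × α)) (S : Finset α) (q : α) : Prop :=
  ∃ r, r ∉ S ∧ ∃ T', IsTreeOn E T' S q ∧ (q, r) ∈ E ∧ T = insert (q, r) T'

/-- `λ^{∘q}_S`. -/
noncomputable def lamC (v : α → α → ℝ) (E : Finset (α × α)) (S : Finset α) (q : α) : EReal :=
  minW {T | IsCTreeOn E T S q} (aweight v)

/-- `λ^∘_S = min_{q ∈ S} λ^{∘q}_S`. -/
noncomputable def lamCirc (v : α → α → ℝ) (E : Finset (α × α)) (S : Finset α) : EReal :=
  minW {T | ∃ q ∈ S, IsCTreeOn E T S q} (aweight v)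

/-- `μ^∘_S`: minimum of `Υ^F_S` over the spanning entering forests `F ∈ 𝓕^∘_S`,
i.e. those in which every vertex of `S` has an outgoing arc. -/
noncomputable def muCirc (v : α → α → ℝ) (E : Finset (α × α)) (S : Finset α) : EReal :=
  minW {A | A ⊆ E ∧ IsEForest A ∧ ∀ i ∈ S, ∃ j, (i, j) ∈ A} fun A => aweightOn v A S

/-- `G ∈ 𝓡^F_y`: `G` is a descendant of `F` at the root `y`, i.e. `y` is a root of
`F`, the roots of `G` are those of `F` except `y`, `G` induces `T^F_q` on the vertex
set of every tree of `F` other than `T^F_y`, and `G` induces a tree on the vertex set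
of `T^F_y`. -/
def IsDescendant (E F G : Finset (α × α)) (y : α) : Prop :=
  y ∈ rootSet F ∧ rootSet G = rootSet F \ {y} ∧
  (∀ q ∈ rootSet G, restrictArcs G (treeVerts F q) = treeArcs F q) ∧
  ∃ a ∈ treeVerts F y, IsTreeOn E (restrictArcs G (treeVerts F y)) (treeVerts F y) a

/-- A potential graph: a connected weighted undirected graph with a loop at every
vertex.  Edges are recorded as a symmetric reflexive set of ordered pairs, with a
symmetric weight function `p`. -/
structure PotGraph (α : Type*) [Fintype α] [DecidableEq α] where
  p : α → α → ℝ
  edges : Finset (α × α)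
  symm_mem : ∀ i j, (i, j) ∈ edges → (j, i) ∈ edges
  loop_mem : ∀ i, (i, i) ∈ edges
  symm_w : ∀ i j, p i j = p j i
  connected : ∀ i j : α, Relation.ReflTransGen (fun a b => (a, b) ∈ edges ∧ a ≠ b) i j

/-- Arc set of the barrier digraph of the potential graph `P`: an arc `(i,j)`, `i ≠ j`,
for each non-loop edge of `P`. -/
def barcs (P : PotGraph α) : Finset (α × α) := P.edges.filter fun a => a.1 ≠ a.2

/-- Arc weights of the barrier digraph: `v i j = p i j - p i i`. -/
def bw (P : PotGraph α) : α → α → ℝ := fun i j => P.p i j - P.p i i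

/-- Weight of a set of undirected edges of `P`. -/
noncomputable def uweight (P : PotGraph α) (T : Finset (Sym2 α)) : ℝ :=
  ∑ e ∈ T, Sym2.lift ⟨P.p, P.symm_w⟩ e

/-- `T ∈ 𝓣_S`: `T` is an undirected tree that is a subgraph of `P` (loops unused)
with vertex set `S`: its edges are non-loop edges of `P` joining vertices of `S`,
it is connected on `S`, and it has `|S| - 1` edges. -/
def IsUTreeOn (P : PotGraph α) (T : Finset (Sym2 α)) (S : Finset α) : Prop :=
  (∀ e ∈ T, ∃ i j, i ≠ j ∧ e = s(i, j) ∧ (i, j) ∈ P.edges ∧ i ∈ S ∧ j ∈ S) ∧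
  (∀ i ∈ S, ∀ j ∈ S, Relation.ReflTransGen (fun a b => s(a, b) ∈ T) i j) ∧
  T.card + 1 = S.card

/-- `ν_S`: minimum weight of an undirected tree on `S` that is a subgraph of `P`. -/
noncomputable def nu (P : PotGraph α) (S : Finset α) : EReal :=
  minW {T | IsUTreeOn P T S} (uweight P)

/-- The underlying undirected edge set of a set of arcs. -/
def undir (A : Finset (α × α)) : Finset (Sym2 α) := A.image fun a => s(a.1, a.2)

/-- `Tq` is the entering tree (with root `q`, vertex set `S`, subgraph of the barrier
digraph of `P`) corresponding to the undirected tree `T`: it is obtained from `T` by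
directing all edges toward `q` and replacing the weight of each arc `(i,j)` by
`v i j = p i j - p i i`. -/
def Corresponds (P : PotGraph α) (Tq : Finset (α × α)) (T : Finset (Sym2 α))
    (S : Finset α) (q : α) : Prop :=
  IsTreeOn (barcs P) Tq S q ∧ undir Tq = T

/-- The minimal barrier `min {p q r : q ∈ V(T^F_l), r ∈ V(T^F_i), (q,r) an edge of P}`
between the vertex sets of the trees of `F` rooted at `l` and at `i` (`⊤` if there is
no such edge); the weight of the arc `(l,i)` of the enlarged barrier digraph `V^k` is
`crossMin P F l i - p l l`. -/
noncomputable def crossMin (P : PotGraph α) (F : Finset (α × α)) (l i : α) : EReal :=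
  sInf ((fun e : α × α => ((P.p e.1 e.2 : ℝ) : EReal)) ''
    {e : α × α | e.1 ∈ treeVerts F l ∧ e.2 ∈ treeVerts F i ∧ e ∈ P.edges})

/-! ### Auxiliary lemmas -/

section AuxForest

variable {F T A : Finset (α × α)} {i j q r y : α}

lemma mem_rootSet_iff : i ∈ rootSet A ↔ ∀ j, (i, j) ∉ A := by
  simp [rootSet]

lemma mem_treeVerts_iff : i ∈ treeVerts F q ↔ Relation.ReflTransGen (arcRel F) i q := by
  simp [treeVerts]

/-- Functionality of a forest. -/
def Funct (A : Finset (α × α)) : Prop := ∀ i j j', (i, j) ∈ A → (i, j') ∈ A → j = j'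

lemma step_reach_root (hfun : Funct F) (hij : (i, j) ∈ F) (hr : r ∈ rootSet F)
    (h : Relation.ReflTransGen (arcRel F) i r) : Relation.ReflTransGen (arcRel F) j r := by
  rcases h.cases_head with h | ⟨c, hc, hcr⟩
  · subst h; exact absurd hij (mem_rootSet_iff.1 hr j)
  · rwa [hfun i c j hc hij] at hcr

lemma reach_root_unique (hfun : Funct F) (hr : r ∈ rootSet F) (hq : q ∈ rootSet F)
    (h1 : Relation.ReflTransGen (arcRel F) i r) (h2 : Relation.ReflTransGen (arcRel F) i q) :
    r = q := by
  induction h1 using Relation.ReflTransGen.head_induction_on with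
  | refl =>
    rcases h2.cases_head with h | ⟨c, hc, _⟩
    · exact h
    · exact absurd hc (mem_rootSet_iff.1 hr c)
  | head hac _ ih => exact ih (step_reach_root hfun hac hq h2)

lemma treeVerts_disjoint (hfun : Funct F) (hr : r ∈ rootSet F) (hq : q ∈ rootSet F)
    (hne : r ≠ q) : Disjoint (treeVerts F r) (treeVerts F q) := by
  rw [Finset.disjoint_left]
  intro i hi hi'
  exact hne (reach_root_unique hfun hr hq (mem_treeVerts_iff.1 hi) (mem_treeVerts_iff.1 hi'))

lemma head_mem_treeVerts (hfun : Funct F) (hq : q ∈ rootSet F) (hij : (i, j) ∈ F)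
    (hi : i ∈ treeVerts F q) : j ∈ treeVerts F q :=
  mem_treeVerts_iff.2 (step_reach_root hfun hij hq (mem_treeVerts_iff.1 hi))

lemma root_mem_treeVerts (hq : q ∈ rootSet F) : q ∈ treeVerts F q :=
  mem_treeVerts_iff.2 Relation.ReflTransGen.refl

lemma root_eq_of_mem_treeVerts (hr : r ∈ rootSet F) (hq : q ∈ rootSet F)
    (h : r ∈ treeVerts F q) : r = q := by
  rcases (mem_treeVerts_iff.1 h).cases_head with h | ⟨c, hc, _⟩
  · exact h
  · exact absurd hc (mem_rootSet_iff.1 hr c)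

lemma exists_reach_root (hF : IsEForest F) (i : α) :
    ∃ r ∈ rootSet F, Relation.ReflTransGen (arcRel F) i r := by
  obtain ⟨hfun, hacyc⟩ := hF
  -- strong induction on the number of vertices reachable from `i`
  have main : ∀ n (i : α), (Finset.univ.filter
      fun j => Relation.ReflTransGen (arcRel F) i j).card ≤ n →
      ∃ r ∈ rootSet F, Relation.ReflTransGen (arcRel F) i r := by
    intro n
    induction n with
    | zero =>
      intro i hi
      exfalso
      have hmem : i ∈ Finset.univ.filter fun j => Relation.ReflTransGen (arcRel F) i j :=
        Finset.mem_filter.2 ⟨Finset.mem_univ i, Relation.ReflTransGen.refl⟩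
      have := Finset.card_pos.2 ⟨i, hmem⟩
      omega
    | succ n ih =>
      intro i hi
      by_cases hroot : i ∈ rootSet F
      · exact ⟨i, hroot, Relation.ReflTransGen.refl⟩
      · rw [mem_rootSet_iff] at hroot; push_neg at hroot
        obtain ⟨j, hj⟩ := hroot
        have hsub : (Finset.univ.filter fun c => Relation.ReflTransGen (arcRel F) j c) ⊆
            (Finset.univ.filter fun c => Relation.ReflTransGen (arcRel F) i c) := by
          intro c hc
          simp only [Finset.mem_filter, Finset.mem_univ, true_and] at hc ⊢
          exact Relation.ReflTransGen.head hj hc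
        have hmem : i ∈ (Finset.univ.filter fun c => Relation.ReflTransGen (arcRel F) i c) :=
          Finset.mem_filter.2 ⟨Finset.mem_univ i, Relation.ReflTransGen.refl⟩
        have hnot : i ∉ (Finset.univ.filter fun c => Relation.ReflTransGen (arcRel F) j c) := by
          simp only [Finset.mem_filter, Finset.mem_univ, true_and]
          intro hji
          exact hacyc j (Relation.TransGen.tail' hji hj)
        have hcard : (Finset.univ.filter
            fun c => Relation.ReflTransGen (arcRel F) j c).card <
            (Finset.univ.filter fun c => Relation.ReflTransGen (arcRel F) i c).card :=
          Finset.card_lt_card (Finset.ssubset_iff_of_subset hsub |>.2 ⟨i, hmem, hnot⟩)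
        obtain ⟨r, hr, hjr⟩ := ih j (by omega)
        exact ⟨r, hr, Relation.ReflTransGen.head hj hjr⟩
  exact main ((Finset.univ.filter fun j => Relation.ReflTransGen (arcRel F) i j).card) i le_rfl

/-- the tails of a forest are exactly the non-roots. -/
lemma image_fst_forest (hfun : Funct F) :
    F.image Prod.fst = Finset.univ \ rootSet F := by
  ext i
  simp only [Finset.mem_image, Finset.mem_sdiff, Finset.mem_univ, true_and, mem_rootSet_iff]
  constructor
  · rintro ⟨⟨a, b⟩, hab, rfl⟩ h; exact h b hab
  · intro h; push_neg at h; obtain ⟨j, hj⟩ := h; exact ⟨(i, j), hj, rfl⟩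

lemma card_forest (hfun : Funct F) : F.card = Fintype.card α - (rootSet F).card := by
  have hinj : Set.InjOn Prod.fst (F : Set (α × α)) := by
    rintro ⟨a, b⟩ ha ⟨c, d⟩ hc (h : a = c)
    subst h
    exact Prod.ext rfl (hfun a b d ha hc)
  have := Finset.card_image_of_injOn hinj
  rw [image_fst_forest hfun] at this
  rw [← this, Finset.card_sdiff_of_subset (Finset.subset_univ _), Finset.card_univ]

end AuxForest

section AuxTree

variable {E T F : Finset (α × α)} {S : Finset α} {q y i j : α}

lemma IsTreeOn.funct (hT : IsTreeOn E T S q) : Funct T := by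
  intro i j j' hj hj'
  have hiS := (hT.2.2.1 _ hj).1
  by_cases hiq : i = q
  · exact absurd hj (hiq ▸ hT.2.2.2.2.1 j)
  · obtain ⟨c, _, hc⟩ := hT.2.2.2.1 i hiS hiq
    rw [hc j hj, hc j' hj']

lemma IsTreeOn.acyclic (hT : IsTreeOn E T S q) (i : α) :
    ¬ Relation.TransGen (arcRel T) i i := by
  have key : ∀ i, Relation.ReflTransGen (arcRel T) i q →
      ¬ Relation.TransGen (arcRel T) i i := by
    intro i hi
    induction hi using Relation.ReflTransGen.head_induction_on with
    | refl =>
      intro h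
      rcases Relation.TransGen.head'_iff.1 h with ⟨c, hc, _⟩
      · exact hT.2.2.2.2.1 c hc
    | head hac hcq ih =>
      rename_i a c
      intro h
      rcases Relation.TransGen.head'_iff.1 h with ⟨c', hc', hrest⟩
      have : c' = c := hT.funct a c' c hc' hac
      subst this
      exact ih (Relation.TransGen.tail' hrest hac)
  intro h
  rcases Relation.TransGen.head'_iff.1 h with ⟨c, hc, _⟩
  have hiS := (hT.2.2.1 _ hc).1
  exact key i (hT.2.2.2.2.2 i hiS) h

lemma IsTreeOn.image_fst (hT : IsTreeOn E T S q) : T.image Prod.fst = S.erase q := by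
  ext i
  simp only [Finset.mem_image, Finset.mem_erase]
  constructor
  · rintro ⟨⟨a, b⟩, hab, rfl⟩
    refine ⟨fun h => hT.2.2.2.2.1 b (h ▸ hab), (hT.2.2.1 _ hab).1⟩
  · rintro ⟨hne, hiS⟩
    obtain ⟨c, hc, _⟩ := hT.2.2.2.1 i hiS hne
    exact ⟨(i, c), hc, rfl⟩

/-- No two arcs of an acyclic functional arc set have the same underlying edge. -/
lemma undir_injOn (hacyc : ∀ i, ¬ Relation.TransGen (arcRel T) i i) :
    Set.InjOn (fun a : α × α => s(a.1, a.2)) (T : Set (α × α)) := by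
  rintro ⟨a, b⟩ ha ⟨c, d⟩ hc h
  simp only [Sym2.eq, Sym2.rel_iff', Prod.mk.injEq, Prod.swap_prod_mk] at h
  rcases h with ⟨rfl, rfl⟩ | ⟨h1, h2⟩
  · rfl
  · exfalso
    subst h1; subst h2
    exact hacyc a (Relation.TransGen.head (show arcRel T a b from ha)
      (Relation.TransGen.single (show arcRel T b a from hc)))

lemma sum_undir (p : α → α → ℝ) (hsymm : ∀ i j, p i j = p j i)
    (hacyc : ∀ i, ¬ Relation.TransGen (arcRel T) i i) :
    ∑ e ∈ undir T, Sym2.lift ⟨p, hsymm⟩ e = ∑ a ∈ T, p a.1 a.2 := by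
  rw [undir, Finset.sum_image (fun a ha b hb h => undir_injOn hacyc ha hb h)]
  refine Finset.sum_congr rfl fun a _ => ?_
  rcases a with ⟨a, b⟩
  rfl

/-- Weight of an entering tree in terms of its undirected edges and the potentials of
its non-root vertices. -/
lemma tree_weight (P : PotGraph α)
    (hfun : Funct T) (hacyc : ∀ i, ¬ Relation.TransGen (arcRel T) i i)
    (htails : T.image Prod.fst = S.erase q) :
    aweight (bw P) T =
      (∑ e ∈ undir T, Sym2.lift ⟨P.p, P.symm_w⟩ e) - ∑ i ∈ S.erase q, P.p i i := by
  have hinj : Set.InjOn Prod.fst (T : Set (α × α)) := by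
    rintro ⟨a, b⟩ ha ⟨c, d⟩ hc (h : a = c)
    subst h
    exact Prod.ext rfl (hfun a b d ha hc)
  have h2 : ∑ i ∈ S.erase q, P.p i i = ∑ a ∈ T, P.p a.1 a.1 := by
    rw [← htails, Finset.sum_image (fun a ha b hb h => hinj ha hb h)]
  rw [sum_undir P.p P.symm_w hacyc, h2, aweight, ← Finset.sum_sub_distrib]
  rfl

/-- The arcs of `F` with tail in the tree of the root `y` form an entering tree. -/
lemma treeArcs_isTreeOn (hF : IsEForest F) (hFE : F ⊆ E) (hy : y ∈ rootSet F) :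
    IsTreeOn E (treeArcs F y) (treeVerts F y) y := by
  obtain ⟨hfun, hacyc⟩ := hF
  have hsub : ∀ a ∈ treeArcs F y, a ∈ F := fun a ha => (Finset.mem_filter.1 ha).1
  refine ⟨root_mem_treeVerts hy, fun a ha => hFE (hsub a ha), ?_, ?_, ?_, ?_⟩
  · rintro ⟨a, b⟩ hab
    have h1 := (Finset.mem_filter.1 hab).2
    exact ⟨h1, head_mem_treeVerts hfun hy (hsub _ hab) h1⟩
  · intro i hiS hiq
    have : i ∉ rootSet F := fun h => hiq (root_eq_of_mem_treeVerts h hy hiS)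
    rw [mem_rootSet_iff] at this; push_neg at this
    obtain ⟨j, hj⟩ := this
    refine ⟨j, Finset.mem_filter.2 ⟨hj, hiS⟩, fun c hc => hfun i c j (hsub _ hc) hj⟩
  · intro j hj
    exact mem_rootSet_iff.1 hy j (hsub _ hj)
  · intro i hiS
    -- the path from i to y in F stays inside the tree
    have : ∀ i, Relation.ReflTransGen (arcRel F) i y →
        Relation.ReflTransGen (arcRel (treeArcs F y)) i y := by
      intro i hi
      induction hi using Relation.ReflTransGen.head_induction_on with
      | refl => exact Relation.ReflTransGen.refl
      | head hac hcy ih =>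
        rename_i a c
        have haS : a ∈ treeVerts F y := mem_treeVerts_iff.2 (Relation.ReflTransGen.head hac hcy)
        exact Relation.ReflTransGen.head (Finset.mem_filter.2 ⟨hac, haS⟩) ih
    exact this i (mem_treeVerts_iff.1 hiS)

end AuxTree

section GStruct

variable {P : PotGraph α} {k : ℕ} {F T' G : Finset (α × α)} {y x a b : α}

/-- Structure of the reoriented forest `G`. -/
lemma G_structure (hF : F ∈ FSet (barcs P) k)
    (hy : y ∈ rootSet F) (hx : x ∈ rootSet F) (hyx : y ≠ x)
    (ha : a ∈ treeVerts F y) (hb : b ∈ treeVerts F x) (hab : (a, b) ∈ P.edges)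
    (hT' : IsTreeOn (barcs P) T' (treeVerts F y) a)
    (hG : G = (F \ treeArcs F y) ∪ T' ∪ {(a, b)}) :
    G ∈ FSet (barcs P) (k - 1) ∧ rootSet G = rootSet F \ {y} ∧
      (∀ q ∈ rootSet G, restrictArcs G (treeVerts F q) = treeArcs F q) ∧
      restrictArcs G (treeVerts F y) = T' ∧
      aweight (bw P) G =
        aweight (bw P) F - aweight (bw P) (treeArcs F y) + aweight (bw P) T'
          + (P.p a b - P.p a a) := by
  obtain ⟨hFE, ⟨hfun, hacyc⟩, hcard⟩ := hF
  have hbS : b ∉ treeVerts F y := by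
    intro h
    exact absurd hb (Finset.disjoint_left.1 (treeVerts_disjoint hfun hy hx hyx) h)
  have haS : a ∈ treeVerts F y := ha
  have habne : a ≠ b := fun h => hbS (h ▸ haS)
  have habbarcs : (a, b) ∈ barcs P := Finset.mem_filter.2 ⟨hab, habne⟩
  have tailT' : ∀ g ∈ T', g.1 ∈ treeVerts F y ∧ g.2 ∈ treeVerts F y := hT'.2.2.1
  have aOut : ∀ j, (a, j) ∉ T' := hT'.2.2.2.2.1
  have memG : ∀ g, g ∈ G ↔ (g ∈ F ∧ g.1 ∉ treeVerts F y) ∨ g ∈ T' ∨ g = (a, b) := by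
    intro g
    subst hG
    simp only [Finset.mem_union, Finset.mem_sdiff, Finset.mem_singleton, treeArcs,
      Finset.mem_filter]
    tauto
  have headF : ∀ g ∈ F, g.1 ∉ treeVerts F y → g.2 ∉ treeVerts F y := by
    rintro ⟨i, j⟩ hg hiS hjS
    exact hiS (mem_treeVerts_iff.2 (Relation.ReflTransGen.head hg (mem_treeVerts_iff.1 hjS)))
  -- functionality of G
  have hGfun : Funct G := by
    intro i j j' hj hj'
    rcases (memG _).1 hj with ⟨h1, h2⟩ | h1 | h1 <;>
      rcases (memG _).1 hj' with ⟨h1', h2'⟩ | h1' | h1'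
    · exact hfun i j j' h1 h1'
    · exact absurd (tailT' _ h1').1 h2
    · exfalso
      injection h1' with e1 e2
      subst e1
      exact h2 haS
    · exact absurd (tailT' _ h1).1 h2'
    · exact hT'.funct i j j' h1 h1'
    · exfalso; cases h1'; exact aOut j h1
    · exfalso
      injection h1 with e1 e2
      subst e1
      exact h2' haS
    · exfalso; cases h1; exact aOut j' h1'
    · cases h1; cases h1'; rfl
  -- paths of G starting in another tree stay in F
  have lemA : ∀ r ∈ rootSet F, r ≠ y → ∀ i j, Relation.TransGen (arcRel G) i j →
      i ∈ treeVerts F r → Relation.TransGen (arcRel F) i j ∧ j ∈ treeVerts F r := by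
    intro r hr hry i j h
    induction h using Relation.TransGen.head_induction_on with
    | single hbase =>
      rename_i c
      intro hcr
      have hcS : c ∉ treeVerts F y := fun hc => hry (reach_root_unique hfun hr hy
        (mem_treeVerts_iff.1 hcr) (mem_treeVerts_iff.1 hc))
      have hcF : (c, j) ∈ F := by
        rcases (memG _).1 hbase with ⟨h1, _⟩ | h1 | h1
        · exact h1
        · exact absurd (tailT' _ h1).1 hcS
        · exfalso; cases h1; exact hcS haS
      exact ⟨Relation.TransGen.single hcF, head_mem_treeVerts hfun hr hcF hcr⟩
    | head hstep htrans ih =>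
      rename_i c m
      intro hcr
      have hcS : c ∉ treeVerts F y := fun hc => hry (reach_root_unique hfun hr hy
        (mem_treeVerts_iff.1 hcr) (mem_treeVerts_iff.1 hc))
      have hcF : (c, m) ∈ F := by
        rcases (memG _).1 hstep with ⟨h1, _⟩ | h1 | h1
        · exact h1
        · exact absurd (tailT' _ h1).1 hcS
        · exfalso; cases h1; exact hcS haS
      have hmr : m ∈ treeVerts F r := head_mem_treeVerts hfun hr hcF hcr
      obtain ⟨hmj, hjr⟩ := ih hmr
      exact ⟨Relation.TransGen.head hcF hmj, hjr⟩
  -- paths of G inside the tree of y are paths of T'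
  have lemB : ∀ i j, Relation.TransGen (arcRel G) i j → i ∈ treeVerts F y →
      j ∈ treeVerts F y → Relation.TransGen (arcRel T') i j := by
    intro i j h
    induction h using Relation.TransGen.head_induction_on with
    | single hbase =>
      rename_i c
      intro hcS hjS
      rcases (memG _).1 hbase with ⟨_, h2⟩ | h1 | h1
      · exact absurd hcS h2
      · exact Relation.TransGen.single h1
      · exfalso; cases h1; exact hbS hjS
    | head hstep htrans ih =>
      rename_i c m
      intro hcS hjS
      have hmS : m ∈ treeVerts F y := by
        by_contra hmS
        obtain ⟨r, hr, hmr⟩ := exists_reach_root ⟨hfun, hacyc⟩ m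
        have hry : r ≠ y := fun h => hmS (h ▸ mem_treeVerts_iff.2 hmr)
        have := (lemA r hr hry m j htrans (mem_treeVerts_iff.2 hmr)).2
        exact hry (reach_root_unique hfun hr hy (mem_treeVerts_iff.1 this)
          (mem_treeVerts_iff.1 hjS))
      have harc : (c, m) ∈ T' := by
        rcases (memG _).1 hstep with ⟨_, h2⟩ | h1 | h1
        · exact absurd hcS h2
        · exact h1
        · exfalso; cases h1; exact hbS hmS
      exact Relation.TransGen.head harc (ih hmS hjS)
  have hGacyc : ∀ i, ¬ Relation.TransGen (arcRel G) i i := by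
    intro i h
    by_cases hiS : i ∈ treeVerts F y
    · exact hT'.acyclic i (lemB i i h hiS hiS)
    · obtain ⟨r, hr, hir⟩ := exists_reach_root ⟨hfun, hacyc⟩ i
      have hry : r ≠ y := fun h' => hiS (h' ▸ mem_treeVerts_iff.2 hir)
      exact hacyc i (lemA r hr hry i i h (mem_treeVerts_iff.2 hir)).1
  -- root set of G
  have hroots : rootSet G = rootSet F \ {y} := by
    ext i
    simp only [Finset.mem_sdiff, Finset.mem_singleton, mem_rootSet_iff]
    constructor
    · intro h
      have hiS : i ∉ treeVerts F y := by
        intro hiS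
        by_cases hia : i = a
        · exact h b ((memG _).2 (Or.inr (Or.inr (by rw [hia]))))
        · obtain ⟨c, hc, _⟩ := hT'.2.2.2.1 i hiS hia
          exact h c ((memG _).2 (Or.inr (Or.inl hc)))
      refine ⟨fun j hj => h j ((memG _).2 (Or.inl ⟨hj, hiS⟩)), fun hiy => hiS (by subst hiy; exact root_mem_treeVerts hy)⟩
    · rintro ⟨hroot, hiy⟩ j hj
      have hiS : i ∉ treeVerts F y := fun h =>
        hiy (root_eq_of_mem_treeVerts (mem_rootSet_iff.2 hroot) hy h)
      rcases (memG _).1 hj with ⟨h1, _⟩ | h1 | h1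
      · exact hroot j h1
      · exact hiS (tailT' _ h1).1
      · cases h1; exact hiS haS
  have hGE : G ⊆ barcs P := by
    intro g hg
    rcases (memG _).1 hg with ⟨h1, _⟩ | h1 | h1
    · exact hFE h1
    · exact hT'.2.1 h1
    · exact h1 ▸ habbarcs
  have hGcard : (rootSet G).card = k - 1 := by
    rw [hroots, Finset.card_sdiff_of_subset (Finset.singleton_subset_iff.2 hy),
      Finset.card_singleton, hcard]
  -- restriction to other trees
  have hrestr : ∀ q ∈ rootSet G, restrictArcs G (treeVerts F q) = treeArcs F q := by
    intro q hq
    have hqF : q ∈ rootSet F := (Finset.mem_sdiff.1 (hroots ▸ hq)).1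
    have hqy : q ≠ y := fun h =>
      (Finset.mem_sdiff.1 (hroots ▸ hq)).2 (Finset.mem_singleton.2 h)
    ext g
    simp only [restrictArcs, treeArcs, Finset.mem_filter]
    constructor
    · rintro ⟨hg, h1, h2⟩
      have hgS : g.1 ∉ treeVerts F y := fun h => hqy (reach_root_unique hfun hqF hy
        (mem_treeVerts_iff.1 h1) (mem_treeVerts_iff.1 h))
      rcases (memG _).1 hg with ⟨hgF, _⟩ | hgT | hgab
      · exact ⟨hgF, h1⟩
      · exact absurd (tailT' _ hgT).1 hgS
      · exfalso; rw [hgab] at h1; exact hgS (hgab ▸ haS)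
    · rintro ⟨hgF, h1⟩
      have hgS : g.1 ∉ treeVerts F y := fun h => hqy (reach_root_unique hfun hqF hy
        (mem_treeVerts_iff.1 h1) (mem_treeVerts_iff.1 h))
      refine ⟨(memG _).2 (Or.inl ⟨hgF, hgS⟩), h1, ?_⟩
      rcases g with ⟨g1, g2⟩
      exact head_mem_treeVerts hfun hqF hgF h1
  have hrestry : restrictArcs G (treeVerts F y) = T' := by
    ext g
    simp only [restrictArcs, Finset.mem_filter]
    constructor
    · rintro ⟨hg, h1, h2⟩
      rcases (memG _).1 hg with ⟨_, hgS⟩ | hgT | hgab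
      · exact absurd h1 hgS
      · exact hgT
      · exfalso; rw [hgab] at h2; exact hbS h2
    · intro hgT
      exact ⟨(memG _).2 (Or.inr (Or.inl hgT)), (tailT' _ hgT).1, (tailT' _ hgT).2⟩
  -- weight
  have hweight : aweight (bw P) G =
      aweight (bw P) F - aweight (bw P) (treeArcs F y) + aweight (bw P) T'
        + (P.p a b - P.p a a) := by
    have htA : treeArcs F y ⊆ F := Finset.filter_subset _ _
    have d1 : Disjoint (F \ treeArcs F y) T' := by
      rw [Finset.disjoint_left]
      rintro g hg hgT
      have := (tailT' _ hgT).1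
      simp only [Finset.mem_sdiff, treeArcs, Finset.mem_filter] at hg
      exact hg.2 ⟨hg.1, this⟩
    have d2 : Disjoint ((F \ treeArcs F y) ∪ T') ({(a, b)} : Finset (α × α)) := by
      rw [Finset.disjoint_right]
      intro g hg
      rw [Finset.mem_singleton] at hg
      subst hg
      rw [Finset.mem_union]
      rintro (h | h)
      · simp only [Finset.mem_sdiff, treeArcs, Finset.mem_filter] at h
        exact h.2 ⟨h.1, haS⟩
      · exact aOut b h
    rw [hG, aweight, Finset.sum_union d2, Finset.sum_union d1]
    have : ∑ g ∈ F \ treeArcs F y, bw P g.1 g.2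
        = aweight (bw P) F - aweight (bw P) (treeArcs F y) := by
      rw [aweight, aweight, ← Finset.sum_sdiff htA]
      ring
    rw [this]
    simp only [Finset.sum_singleton, aweight, bw]
  exact ⟨⟨hGE, ⟨hGfun, hGacyc⟩, hGcard⟩, hroots, hrestr, hrestry, hweight⟩

end GStruct

/-! ### The apex graph -/

section Apex

/-- Undirected reachability in a set of edges. -/
def Reach (E : Finset (Sym2 (Option α))) (u v : Option α) : Prop :=
  Relation.ReflTransGen (fun a b => s(a, b) ∈ E) u v

lemma Reach.symm {E : Finset (Sym2 (Option α))} {u v : Option α}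
    (h : Reach E u v) : Reach E v u :=
  (@Relation.ReflTransGen.symmetric _ (fun a b => s(a, b) ∈ E)
    ⟨fun a b hab => by rwa [Sym2.eq_swap] at hab⟩).symm _ _ h

lemma Reach.mono {E E' : Finset (Sym2 (Option α))} (hE : E ⊆ E') {u v : Option α}
    (h : Reach E u v) : Reach E' u v :=
  Relation.ReflTransGen.mono (p := fun a b => s(a, b) ∈ E') (fun a b hab => hE hab) u v h

lemma sym2_ss_iff {a b c d : α} :
    s((some a : Option α), some b) = s((some c : Option α), some d) ↔
      (a = c ∧ b = d) ∨ (a = d ∧ b = c) := by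
  simp [Sym2.eq_iff]

lemma sym2_ss_ne_sn {a b c : α} :
    s((some a : Option α), some b) ≠ s((some c : Option α), (none : Option α)) := by
  simp [Sym2.eq_iff]

lemma sym2_sn_iff {a b : α} :
    s((some a : Option α), (none : Option α)) = s((some b : Option α), (none : Option α)) ↔
      a = b := by
  simp [Sym2.eq_iff]

/-- Bounded-length reachability. -/
def dReachN (E : Finset (Sym2 (Option α))) : ℕ → Option α → Option α → Prop
  | 0, u, v => u = v
  | n + 1, u, v => ∃ w, s(u, w) ∈ E ∧ dReachN E n w v

lemma reach_iff_dReachN {E : Finset (Sym2 (Option α))} {u v : Option α} :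
    Reach E u v ↔ ∃ n, dReachN E n u v := by
  constructor
  · intro h
    induction h using Relation.ReflTransGen.head_induction_on with
    | refl => exact ⟨0, rfl⟩
    | head hab _ ih =>
      obtain ⟨n, hn⟩ := ih
      exact ⟨n + 1, _, hab, hn⟩
  · rintro ⟨n, hn⟩
    induction n generalizing u with
    | zero => exact hn ▸ Relation.ReflTransGen.refl
    | succ n ih =>
      obtain ⟨w, hw, hn⟩ := hn
      exact Relation.ReflTransGen.head hw (ih hn)

variable (P : PotGraph α)

/-- Weight of an apex edge. -/
def awFun : Option α → Option α → ℝ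
  | some i, some j => P.p i j
  | some i, none => P.p i i
  | none, some j => P.p j j
  | none, none => 0

lemma awFun_symm : ∀ u v, awFun P u v = awFun P v u := by
  intro u v
  cases u <;> cases v <;> first | rfl | exact P.symm_w _ _

/-- Weight of an undirected apex edge. -/
def aw : Sym2 (Option α) → ℝ := Sym2.lift ⟨awFun P, awFun_symm P⟩

/-- Total weight of a set of apex edges. -/
def tw (T : Finset (Sym2 (Option α))) : ℝ := ∑ e ∈ T, aw P e

/-- Edges of the apex graph: non-loop edges of `P` together with an edge from each
vertex to the apex `none`. -/
noncomputable def apexEdges : Finset (Sym2 (Option α)) :=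
  (barcs P).image (fun g => s(some g.1, some g.2)) ∪
    Finset.univ.image (fun i : α => s(some i, (none : Option α)))

/-- The neighbours of the apex. -/
noncomputable def zroots (T : Finset (Sym2 (Option α))) : Finset α :=
  Finset.univ.filter fun i => s(some i, (none : Option α)) ∈ T

/-- A spanning tree of the apex graph: a spanning connected subgraph of the apex
graph with `|α|` edges. -/
def IsApexTree (T : Finset (Sym2 (Option α))) : Prop :=
  T ⊆ apexEdges P ∧ (∀ v, Reach T v none) ∧ T.card = Fintype.card α

/-- The apex tree associated with a spanning entering forest. -/
noncomputable def toApex (F : Finset (α × α)) : Finset (Sym2 (Option α)) :=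
  F.image (fun g => s(some g.1, some g.2)) ∪
    (rootSet F).image (fun i => s(some i, (none : Option α)))

variable {P}

lemma barcs_symm {i j : α} (h : (i, j) ∈ barcs P) : (j, i) ∈ barcs P := by
  simp only [barcs, Finset.mem_filter] at h ⊢
  exact ⟨P.symm_mem i j h.1, Ne.symm h.2⟩

lemma mem_apexEdges_somesome {q r : α} (h : s(some q, some r) ∈ apexEdges P) :
    (q, r) ∈ barcs P := by
  simp only [apexEdges, Finset.mem_union, Finset.mem_image] at h
  rcases h with ⟨⟨g1, g2⟩, hg, hgeq⟩ | ⟨i, _, hi⟩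
  · rcases sym2_ss_iff.1 hgeq.symm with ⟨h1, h2⟩ | ⟨h1, h2⟩
    · subst h1; subst h2; exact hg
    · subst h1; subst h2; exact barcs_symm hg
  · exact absurd hi.symm sym2_ss_ne_sn

lemma mem_apexEdges_apex (i : α) : s(some i, (none : Option α)) ∈ apexEdges P := by
  simp only [apexEdges, Finset.mem_union, Finset.mem_image]
  exact Or.inr ⟨i, Finset.mem_univ i, rfl⟩

lemma mem_apexEdges_of_barcs {i j : α} (h : (i, j) ∈ barcs P) :
    s(some i, some j) ∈ apexEdges P := by
  simp only [apexEdges, Finset.mem_union, Finset.mem_image]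
  exact Or.inl ⟨(i, j), h, rfl⟩

lemma arc_mem_toApex {F : Finset (α × α)} {c d : α} (h : (c, d) ∈ F) :
    s((some c : Option α), some d) ∈ toApex F :=
  Finset.mem_union_left _ (Finset.mem_image.2 ⟨(c, d), h, rfl⟩)

lemma root_mem_toApex {F : Finset (α × α)} {r : α} (h : r ∈ rootSet F) :
    s((some r : Option α), (none : Option α)) ∈ toApex F :=
  Finset.mem_union_right _ (Finset.mem_image.2 ⟨r, h, rfl⟩)

lemma reach_toApex_erase {F : Finset (α × α)} {l : α} {c m : α}
    (h : Relation.ReflTransGen (arcRel F) c m) :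
    Reach ((toApex F).erase s((some l : Option α), (none : Option α))) (some c) (some m) := by
  induction h using Relation.ReflTransGen.head_induction_on with
  | refl => exact Relation.ReflTransGen.refl
  | head hac hrest ih =>
    rename_i u v
    exact Relation.ReflTransGen.head
      (Finset.mem_erase.2 ⟨sym2_ss_ne_sn, arc_mem_toApex hac⟩) ih

/-- A spanning entering forest yields an apex spanning tree. -/
lemma toApex_isApexTree {F : Finset (α × α)} {k : ℕ} (hF : F ∈ FSet (barcs P) k) :
    IsApexTree P (toApex F) ∧ zroots (toApex F) = rootSet F ∧
      tw P (toApex F) = aweight (bw P) F + ∑ i, P.p i i := by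
  obtain ⟨hFE, ⟨hfun, hacyc⟩, hcard⟩ := hF
  have memTA : ∀ e, e ∈ toApex F ↔
      (∃ g ∈ F, e = s(some g.1, some g.2)) ∨ ∃ r ∈ rootSet F, e = s(some r, none) := by
    intro e
    simp only [toApex, Finset.mem_union, Finset.mem_image]
    constructor
    · rintro (⟨g, hg, rfl⟩ | ⟨r, hr, rfl⟩)
      · exact Or.inl ⟨g, hg, rfl⟩
      · exact Or.inr ⟨r, hr, rfl⟩
    · rintro (⟨g, hg, rfl⟩ | ⟨r, hr, rfl⟩)
      · exact Or.inl ⟨g, hg, rfl⟩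
      · exact Or.inr ⟨r, hr, rfl⟩
  have injF : Set.InjOn (fun g : α × α => s(some g.1, some g.2)) (F : Set (α × α)) := by
    rintro ⟨c, d⟩ hcd ⟨c', d'⟩ hcd' h
    rcases sym2_ss_iff.1 h with ⟨h1, h2⟩ | ⟨h1, h2⟩
    · subst h1; subst h2; rfl
    · subst h1; subst h2
      exfalso
      exact hacyc c (Relation.TransGen.head (show arcRel F c d from hcd)
        (Relation.TransGen.single (show arcRel F d c from hcd')))

  have injR : Set.InjOn (fun i : α => s(some i, (none : Option α)))
      ((rootSet F : Set α)) := by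
    intro i _ j _ h
    exact sym2_sn_iff.1 h
  have hdisj : Disjoint (F.image (fun g : α × α => s(some g.1, some g.2)))
      ((rootSet F).image (fun i => s(some i, (none : Option α)))) := by
    rw [Finset.disjoint_left]
    rintro e he he'
    obtain ⟨g, _, rfl⟩ := Finset.mem_image.1 he
    obtain ⟨r, _, hr⟩ := Finset.mem_image.1 he'
    exact absurd hr.symm sym2_ss_ne_sn
  have hzr : zroots (toApex F) = rootSet F := by
    ext i
    simp only [zroots, Finset.mem_filter, Finset.mem_univ, true_and, memTA]
    constructor
    · rintro (⟨g, hg, hgeq⟩ | ⟨r, hr, hreq⟩)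
      · exact absurd hgeq.symm sym2_ss_ne_sn
      · rw [sym2_sn_iff.1 hreq]; exact hr
    · intro h
      exact Or.inr ⟨i, h, rfl⟩
  have harc_edge : ∀ {c d : α}, (c, d) ∈ F → s(some c, some d) ∈ toApex F := by
    intro c d h
    exact (memTA _).2 (Or.inl ⟨(c, d), h, rfl⟩)
  have hconn : ∀ v, Reach (toApex F) v none := by
    intro v
    cases v with
    | none => exact Relation.ReflTransGen.refl
    | some i =>
      obtain ⟨r, hr, hir⟩ := exists_reach_root ⟨hfun, hacyc⟩ i
      have reach_some : ∀ c : α, Relation.ReflTransGen (arcRel F) c r →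
          Reach (toApex F) (some c) (some r) := by
        intro c h
        induction h using Relation.ReflTransGen.head_induction_on with
        | refl => exact Relation.ReflTransGen.refl
        | head hcd _ ih => exact Relation.ReflTransGen.head (harc_edge hcd) ih
      refine (reach_some i hir).trans ?_
      exact Relation.ReflTransGen.single ((memTA _).2 (Or.inr ⟨r, hr, rfl⟩))
  have hcardTA : (toApex F).card = Fintype.card α := by
    rw [toApex, Finset.card_union_of_disjoint hdisj, Finset.card_image_of_injOn injF,
      Finset.card_image_of_injOn injR, card_forest hfun, hcard]
    have : k ≤ Fintype.card α := by
      rw [← hcard]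
      exact le_trans (Finset.card_le_card (Finset.subset_univ _)) Finset.card_univ.le
    omega
  have hsub : toApex F ⊆ apexEdges P := by
    intro e he
    rcases (memTA _).1 he with ⟨g, hg, rfl⟩ | ⟨r, _, rfl⟩
    · exact mem_apexEdges_of_barcs (hFE hg)
    · exact mem_apexEdges_apex r
  have htw : tw P (toApex F) = aweight (bw P) F + ∑ i, P.p i i := by
    have hinjfst : Set.InjOn Prod.fst (F : Set (α × α)) := by
      rintro ⟨c, d⟩ hcd ⟨c', d'⟩ hcd' (h : c = c')
      subst h
      exact Prod.ext rfl (hfun c d d' hcd hcd')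
    have h1 : ∑ e ∈ F.image (fun g : α × α => s(some g.1, some g.2)), aw P e
        = ∑ g ∈ F, P.p g.1 g.2 := by
      rw [Finset.sum_image (fun a ha b hb h => injF ha hb h)]
      rfl
    have h2 : ∑ e ∈ (rootSet F).image (fun i => s(some i, (none : Option α))), aw P e
        = ∑ r ∈ rootSet F, P.p r r := by
      rw [Finset.sum_image (fun a ha b hb h => injR ha hb h)]
      rfl
    have h3 : ∑ g ∈ F, P.p g.1 g.1 = ∑ i ∈ Finset.univ \ rootSet F, P.p i i := by
      rw [← image_fst_forest hfun, Finset.sum_image (fun a ha b hb h => hinjfst ha hb h)]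
    have h4 : aweight (bw P) F = ∑ g ∈ F, P.p g.1 g.2 - ∑ g ∈ F, P.p g.1 g.1 := by
      rw [aweight, ← Finset.sum_sub_distrib]
      rfl
    rw [tw, toApex, Finset.sum_union hdisj, h1, h2, h4, h3]
    have h5 : ∑ i ∈ Finset.univ \ rootSet F, P.p i i + ∑ r ∈ rootSet F, P.p r r
        = ∑ i, P.p i i := Finset.sum_sdiff (Finset.subset_univ _)
    linarith
  exact ⟨⟨hsub, hconn, hcardTA⟩, hzr, htw⟩

/-- An apex spanning tree yields a spanning entering forest of the same weight. -/
lemma orient_apexTree {T : Finset (Sym2 (Option α))} (hT : IsApexTree P T) :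
    ∃ A : Finset (α × α), A ∈ FSet (barcs P) ((zroots T).card) ∧
      aweight (bw P) A + ∑ i, P.p i i = tw P T := by
  obtain ⟨hsub, hconn, hcard⟩ := hT
  have dex : ∀ v, ∃ n, dReachN T n v none := fun v => reach_iff_dReachN.1 (hconn v)
  set dd : Option α → ℕ := fun v => Nat.find (dex v) with hdd
  set NR : Finset α := Finset.univ.filter
    (fun i : α => s(some i, (none : Option α)) ∉ T) with hNR
  have key : ∀ i ∈ NR, ∃ j : α, s(some i, some j) ∈ T ∧ dd (some j) < dd (some i) := by
    intro i hi
    rw [hNR, Finset.mem_filter] at hi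
    have hspec := Nat.find_spec (dex (some i))
    have hpos : dd (some i) ≠ 0 := by
      intro h0
      have : dReachN T 0 (some i) none := by
        rw [hdd] at h0
        exact h0 ▸ Nat.find_spec (dex (some i))
      exact Option.some_ne_none i this
    obtain ⟨m, hm⟩ := Nat.exists_eq_succ_of_ne_zero hpos
    rw [show Nat.find (dex (some i)) = dd (some i) from rfl, hm] at hspec
    obtain ⟨w, hw, hwreach⟩ := hspec
    have hwnone : w ≠ none := fun h => hi.2 (h ▸ hw)
    obtain ⟨j, rfl⟩ := Option.ne_none_iff_exists'.1 hwnone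
    refine ⟨j, hw, ?_⟩
    have : dd (some j) ≤ m := Nat.find_le hwreach
    omega
  choose! par hpar1 hpar2 using key
  set A : Finset (α × α) := NR.image (fun i => (i, par i)) with hA
  have memA : ∀ g : α × α, g ∈ A ↔ g.1 ∈ NR ∧ g.2 = par g.1 := by
    rintro ⟨c, d⟩
    simp only [hA, Finset.mem_image]
    constructor
    · rintro ⟨i, hi, heq⟩
      injection heq with h1 h2
      subst h1
      exact ⟨hi, h2.symm⟩
    · rintro ⟨hc, hd⟩
      exact ⟨c, hc, by rw [hd]⟩
  have hAfun : Funct A := by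
    intro i j j' hj hj'
    have h1 : j = par i := (memA _).1 hj |>.2
    have h2 : j' = par i := (memA _).1 hj' |>.2
    rw [h1, h2]
  have hdec : ∀ {i j : α}, (i, j) ∈ A → dd (some j) < dd (some i) := by
    intro i j h
    have h2 : j = par i := (memA _).1 h |>.2
    rw [h2]
    exact hpar2 i ((memA _).1 h).1
  have hAacyc : ∀ i, ¬ Relation.TransGen (arcRel A) i i := by
    have hlt : ∀ i j, Relation.TransGen (arcRel A) i j → dd (some j) < dd (some i) := by
      intro i j h
      induction h with
      | single h => exact hdec h
      | tail _ h ih => exact lt_trans (hdec h) ih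
    intro i h
    exact lt_irrefl _ (hlt i i h)
  have hAroots : rootSet A = zroots T := by
    ext i
    simp only [mem_rootSet_iff, zroots, Finset.mem_filter, Finset.mem_univ, true_and]
    constructor
    · intro h
      by_contra hnot
      exact h (par i) ((memA _).2 ⟨Finset.mem_filter.2 ⟨Finset.mem_univ i, hnot⟩, rfl⟩)
    · intro h j hj
      rw [memA] at hj
      rw [hNR, Finset.mem_filter] at hj
      exact hj.1.2 h
  have hAE : A ⊆ barcs P := by
    rintro ⟨c, d⟩ h
    obtain ⟨hc, hd⟩ := (memA _).1 h
    have hd' : d = par c := hd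
    rw [hd']
    exact mem_apexEdges_somesome (hsub (hpar1 c hc))
  -- the map from vertices to tree edges
  set φ : α → Sym2 (Option α) := fun i =>
    if i ∈ NR then s(some i, some (par i)) else s(some i, (none : Option α)) with hφ
  have hφmem : ∀ i, φ i ∈ T := by
    intro i
    show (if i ∈ NR then s(some i, some (par i)) else s((some i : Option α), none)) ∈ T
    by_cases h : i ∈ NR
    · rw [if_pos h]; exact hpar1 i h
    · rw [if_neg h]
      rw [hNR, Finset.mem_filter] at h
      push_neg at h
      exact h (Finset.mem_univ i)
  have hφinj : Set.InjOn φ (Finset.univ : Finset α) := by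
    intro i _ i' _ h
    have h' : (if i ∈ NR then s(some i, some (par i)) else s((some i : Option α), none))
        = (if i' ∈ NR then s(some i', some (par i')) else s((some i' : Option α), none)) := h
    by_cases h1 : i ∈ NR <;> by_cases h2 : i' ∈ NR
    · rw [if_pos h1, if_pos h2] at h'
      rcases sym2_ss_iff.1 h' with ⟨ha, _⟩ | ⟨ha, hb⟩
      · exact ha
      · exfalso
        have l1 := hpar2 i h1
        have l2 := hpar2 i' h2
        rw [hb] at l1
        rw [← ha] at l2
        omega
    · rw [if_pos h1, if_neg h2] at h'
      exact absurd h' sym2_ss_ne_sn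
    · rw [if_neg h1, if_pos h2] at h'
      exact absurd h'.symm sym2_ss_ne_sn
    · rw [if_neg h1, if_neg h2] at h'
      exact sym2_sn_iff.1 h'
  have himg : Finset.univ.image φ = T := by
    apply Finset.eq_of_subset_of_card_le
    · intro e he
      obtain ⟨i, _, rfl⟩ := Finset.mem_image.1 he
      exact hφmem i
    · rw [Finset.card_image_of_injOn hφinj, Finset.card_univ, hcard]
  have hwsum : tw P T = ∑ i, aw P (φ i) := by
    rw [← himg, tw, Finset.sum_image (fun a ha b hb h => hφinj ha hb h)]
  have hsplit : ∑ i, aw P (φ i)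
      = ∑ i ∈ NR, P.p i (par i) + ∑ i ∈ NRᶜ, P.p i i := by
    rw [← Finset.sum_add_sum_compl NR (fun i => aw P (φ i))]
    congr 1
    · refine Finset.sum_congr rfl fun i hi => ?_
      show aw P (if i ∈ NR then s(some i, some (par i)) else s((some i : Option α), none)) = _
      rw [if_pos hi]
      rfl
    · refine Finset.sum_congr rfl fun i hi => ?_
      rw [Finset.mem_compl] at hi
      show aw P (if i ∈ NR then s(some i, some (par i)) else s((some i : Option α), none)) = _
      rw [if_neg hi]
      rfl
  have haweight : aweight (bw P) A = ∑ i ∈ NR, (P.p i (par i) - P.p i i) := by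
    rw [aweight, hA, Finset.sum_image]
    · rfl
    · intro i _ j _ h
      injection h
  have hfinal : ∑ i ∈ NR, P.p i i + ∑ i ∈ NRᶜ, P.p i i = ∑ i, P.p i i :=
    Finset.sum_add_sum_compl NR _
  refine ⟨A, ⟨hAE, ⟨hAfun, hAacyc⟩, by rw [hAroots]⟩, ?_⟩
  rw [hwsum, hsplit, haweight, Finset.sum_sub_distrib]
  linarith

end Apex

section Exchange

variable {T : Finset (Sym2 (Option α))} {D : Finset α} {l : α}

/-- Removing one edge of a connected graph splits it into at most two parts. -/
lemma reach_erase_split {f : Sym2 (Option α)} {q r : Option α} (hf : f = s(q, r)) :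
    ∀ {v w : Option α}, Reach T v w →
      Reach (T.erase f) v w ∨ Reach (T.erase f) v q ∨ Reach (T.erase f) v r := by
  intro v w h
  induction h using Relation.ReflTransGen.head_induction_on with
  | refl => exact Or.inl Relation.ReflTransGen.refl
  | head hac hrest ih =>
    rename_i a c
    by_cases hfe : s(a, c) = f
    · rw [hf, Sym2.eq_iff] at hfe
      rcases hfe with ⟨h1, _⟩ | ⟨h1, _⟩
      · exact Or.inr (Or.inl (h1 ▸ Relation.ReflTransGen.refl))
      · exact Or.inr (Or.inr (h1 ▸ Relation.ReflTransGen.refl))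
    · have hmem : s(a, c) ∈ T.erase f := Finset.mem_erase.2 ⟨hfe, hac⟩
      rcases ih with h | h | h
      · exact Or.inl (Relation.ReflTransGen.head hmem h)
      · exact Or.inr (Or.inl (Relation.ReflTransGen.head hmem h))
      · exact Or.inr (Or.inr (Relation.ReflTransGen.head hmem h))

/-- From a walk avoiding the edge `f` we get reachability in `T.erase f`. -/
lemma walk_to_reach_erase {f : Sym2 (Option α)}
    {u v : Option α} (w : (SimpleGraph.fromEdgeSet (T : Set (Sym2 (Option α)))).Walk u v) :
    (∀ e ∈ w.edges, e ≠ f) → Reach (T.erase f) u v := by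
  induction w with
  | nil => exact fun _ => Relation.ReflTransGen.refl
  | cons h w' ih =>
    intro hw
    have h' := h
    rw [SimpleGraph.fromEdgeSet_adj] at h'
    refine Relation.ReflTransGen.head (Finset.mem_erase.2
      ⟨hw _ (by rw [SimpleGraph.Walk.edges_cons]; exact List.mem_cons_self), h'.1⟩) ?_
    exact ih fun e he => hw e (by rw [SimpleGraph.Walk.edges_cons]; exact List.mem_cons_of_mem _ he)

lemma reach_to_reachable {u v : Option α} (h : Reach T u v) :
    (SimpleGraph.fromEdgeSet (T : Set (Sym2 (Option α)))).Reachable u v := by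
  induction h using Relation.ReflTransGen.head_induction_on with
  | refl => exact SimpleGraph.Reachable.refl _
  | head hac hrest ih =>
    rename_i a c
    by_cases hEq : a = c
    · exact hEq ▸ ih
    · exact (SimpleGraph.Adj.reachable (by rw [SimpleGraph.fromEdgeSet_adj]; exact ⟨hac, hEq⟩)).trans ih

/-- The key exchange lemma: if `l ∈ D` is not joined to the apex in the spanning
connected `T`, then `T` has an edge `f` leaving `some '' D` such that replacing `f`
with the apex edge at `l` keeps the graph spanning connected. -/
lemma exchange_step (hconn : ∀ v, Reach T v none) (hl : l ∈ D) :
    ∃ q r : Option α, q ∈ D.image some ∧ r ∉ D.image some ∧ s(q, r) ∈ T ∧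
      ∀ v, Reach (insert s((some l : Option α), (none : Option α)) (T.erase s(q, r))) v none := by
  classical
  set Gr := SimpleGraph.fromEdgeSet (T : Set (Sym2 (Option α))) with hGr
  have hnone_notD : (none : Option α) ∉ D.image some := by
    intro h
    obtain ⟨d, _, hd⟩ := Finset.mem_image.1 h
    exact Option.some_ne_none d hd
  have find : ∀ (u v : Option α) (w : Gr.Walk u v), w.IsPath → u ∈ D.image some →
      v ∉ D.image some →
      ∃ q r : Option α, q ∈ D.image some ∧ r ∉ D.image some ∧ s(q, r) ∈ T ∧
        Reach (T.erase s(q, r)) u q ∧ Reach (T.erase s(q, r)) r v := by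
    intro u v w
    induction w with
    | nil => exact fun _ hu hv => absurd hu hv
    | cons h w' ih =>
      rename_i a c d
      intro hp ha hv
      have hadj := h
      rw [hGr, SimpleGraph.fromEdgeSet_adj] at hadj
      by_cases hc : c ∈ D.image some
      · obtain ⟨q, r, hq, hr, hfT, hcq, hrz⟩ :=
          ih (SimpleGraph.Walk.IsPath.of_cons hp) hc hv
        have hne : s(a, c) ≠ s(q, r) := by
          intro hEq
          rw [Sym2.eq_iff] at hEq
          rcases hEq with ⟨_, h2⟩ | ⟨h2, _⟩
          · exact hr (h2 ▸ hc)
          · exact hr (h2 ▸ ha)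
        exact ⟨q, r, hq, hr, hfT,
          Relation.ReflTransGen.head (Finset.mem_erase.2 ⟨hne, hadj.1⟩) hcq, hrz⟩
      · refine ⟨a, c, ha, hc, hadj.1, Relation.ReflTransGen.refl, ?_⟩
        refine walk_to_reach_erase w' fun e he hEq => ?_
        subst hEq
        have : a ∈ w'.support := SimpleGraph.Walk.fst_mem_support_of_mem_edges w' he
        exact (SimpleGraph.Walk.cons_isPath_iff h w' |>.1 hp).2 this
  obtain ⟨w⟩ := reach_to_reachable (hconn (some l))
  have hlD : (some l : Option α) ∈ D.image some := Finset.mem_image.2 ⟨l, hl, rfl⟩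
  obtain ⟨q, r, hq, hr, hfT, hlq, hrz⟩ :=
    find (some l) none w.toPath.1 w.toPath.2 hlD hnone_notD
  refine ⟨q, r, hq, hr, hfT, ?_⟩
  intro v
  set e : Sym2 (Option α) := s((some l : Option α), (none : Option α)) with he
  have hsub : T.erase s(q, r) ⊆ insert e (T.erase s(q, r)) := Finset.subset_insert _ _
  have hql : Reach (insert e (T.erase s(q, r))) q (none : Option α) := by
    refine ((hlq.mono hsub).symm.trans ?_)
    exact Relation.ReflTransGen.single (Finset.mem_insert_self _ _)
  rcases reach_erase_split rfl (hconn v) with h | h | h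
  · exact h.mono hsub
  · exact (h.mono hsub).trans hql
  · exact (h.mono hsub).trans ((hrz.mono hsub))

end Exchange

section LowerBound

variable {P : PotGraph α} {k : ℕ} {F : Finset (α × α)} {y x a b : α}

lemma mem_zroots_iff {T : Finset (Sym2 (Option α))} {i : α} :
    i ∈ zroots T ↔ s((some i : Option α), (none : Option α)) ∈ T := by
  simp [zroots]

/-- The fundamental lower bound: every apex spanning tree with apex degree `k - 1`
weighs at least `tw (toApex F) + (p a b - p y y)`. -/
lemma tw_lower_bound (hFmin : IsMinForest (bw P) (barcs P) k F) (hk : 1 ≤ k)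
    (hy : y ∈ rootSet F) (hx : x ∈ rootSet F) (hyx : y ≠ x)
    (hminarc : ∀ l ∈ rootSet F, ∀ i ∈ rootSet F, l ≠ i →
      crossMin P F y x - ((P.p y y : ℝ) : EReal) ≤ crossMin P F l i - ((P.p l l : ℝ) : EReal))
    (ha : a ∈ treeVerts F y) (hb : b ∈ treeVerts F x) (hab : (a, b) ∈ P.edges)
    (habmin : ∀ q ∈ treeVerts F y, ∀ r ∈ treeVerts F x, (q, r) ∈ P.edges → P.p a b ≤ P.p q r) :
    ∀ T : Finset (Sym2 (Option α)), IsApexTree P T → (zroots T).card = k - 1 →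
      tw P (toApex F) + (P.p a b - P.p y y) ≤ tw P T := by
  obtain ⟨hTA, hzrF, htwF⟩ := toApex_isApexTree hFmin.1
  obtain ⟨hFE, ⟨hfun, hacyc⟩, hcardF⟩ := hFmin.1
  -- the cross bound from the minimality of the arc (y, x) of the enlarged digraph
  have crossBound : ∀ l ∈ rootSet F, ∀ i ∈ rootSet F, l ≠ i →
      ∀ q' ∈ treeVerts F l, ∀ r' ∈ treeVerts F i, (q', r') ∈ P.edges →
      P.p a b - P.p y y ≤ P.p q' r' - P.p l l := by
    intro l hl i hi hli q' hq' r' hr' hqr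
    have h1 : crossMin P F l i ≤ ((P.p q' r' : ℝ) : EReal) :=
      sInf_le ⟨(q', r'), ⟨hq', hr', hqr⟩, rfl⟩
    have h2 : ((P.p a b : ℝ) : EReal) ≤ crossMin P F y x := by
      apply le_sInf
      rintro w ⟨⟨u1, u2⟩, ⟨hu1, hu2, hedge⟩, rfl⟩
      exact EReal.coe_le_coe_iff.2 (habmin u1 hu1 u2 hu2 hedge)
    have h4 : ((P.p a b : ℝ) : EReal) - ((P.p y y : ℝ) : EReal)
        ≤ ((P.p q' r' : ℝ) : EReal) - ((P.p l l : ℝ) : EReal) :=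
      le_trans (EReal.sub_le_sub h2 le_rfl)
        (le_trans (hminarc l hl i hi hli) (EReal.sub_le_sub h1 le_rfl))
    rw [← EReal.coe_sub, ← EReal.coe_sub] at h4
    exact EReal.coe_le_coe_iff.1 h4
  -- minimality of F transfers to apex trees of apex degree k
  have minTrans : ∀ T3 : Finset (Sym2 (Option α)), IsApexTree P T3 → (zroots T3).card = k →
      tw P (toApex F) ≤ tw P T3 := by
    intro T3 h3 hdeg
    obtain ⟨A, hA, hAw⟩ := orient_apexTree h3
    rw [hdeg] at hA
    have hle : aweight (bw P) F ≤ aweight (bw P) A := by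
      have h5 : phi (bw P) (barcs P) k ≤ ((aweight (bw P) A : ℝ) : EReal) :=
        sInf_le ⟨A, hA, rfl⟩
      rw [← hFmin.2] at h5
      exact EReal.coe_le_coe_iff.1 h5
    rw [htwF, ← hAw]
    linarith
  -- main strong induction
  have main : ∀ m : ℕ, ∀ T : Finset (Sym2 (Option α)), IsApexTree P T →
      (zroots T).card = k - 1 → (rootSet F \ zroots T).card = m →
      tw P (toApex F) + (P.p a b - P.p y y) ≤ tw P T := by
    intro m
    induction m using Nat.strong_induction_on with
    | _ m ih =>
    intro T hT hdeg hm
    have hne : (rootSet F \ zroots T).Nonempty := by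
      rw [Finset.sdiff_nonempty]
      intro hsub
      have := Finset.card_le_card hsub
      rw [hcardF, hdeg] at this
      omega
    obtain ⟨l, hlmem⟩ := hne
    have hlF : l ∈ rootSet F := (Finset.mem_sdiff.1 hlmem).1
    have hlT : s((some l : Option α), (none : Option α)) ∉ T := by
      have := (Finset.mem_sdiff.1 hlmem).2
      rwa [mem_zroots_iff] at this
    have hlzT : l ∉ zroots T := fun h => hlT (mem_zroots_iff.1 h)
    obtain ⟨q, r, hqD, hrD, hfT, hconn2⟩ := exchange_step hT.2.1 (root_mem_treeVerts hlF)
    obtain ⟨q', hq'D, rfl⟩ := Finset.mem_image.1 hqD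
    have heT : s((some l : Option α), (none : Option α)) ∉ T := hlT
    have hefne : s((some l : Option α), (none : Option α)) ≠ s(some q', r) :=
      fun h => heT (h ▸ hfT)
    have hT2sub : insert s((some l : Option α), (none : Option α)) (T.erase s(some q', r))
        ⊆ apexEdges P := by
      intro g hg
      rcases Finset.mem_insert.1 hg with rfl | hg
      · exact mem_apexEdges_apex l
      · exact hT.1 (Finset.mem_of_mem_erase hg)
    have hT2card : (insert s((some l : Option α), (none : Option α))
        (T.erase s(some q', r))).card = Fintype.card α := by
      rw [Finset.card_insert_of_notMem (fun h => heT (Finset.mem_of_mem_erase h)),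
        Finset.card_erase_of_mem hfT, hT.2.2]
      have h1 : 1 ≤ T.card := Finset.card_pos.2 ⟨_, hfT⟩
      rw [hT.2.2] at h1
      omega
    have hT2 : IsApexTree P (insert s((some l : Option α), (none : Option α))
        (T.erase s(some q', r))) := ⟨hT2sub, hconn2, hT2card⟩
    have htwT2 : tw P (insert s((some l : Option α), (none : Option α))
        (T.erase s(some q', r))) = tw P T - aw P s(some q', r) + P.p l l := by
      rw [tw, Finset.sum_insert (fun h => heT (Finset.mem_of_mem_erase h))]
      have h6 : ∑ g ∈ T.erase s(some q', r), aw P g + aw P s(some q', r)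
          = ∑ g ∈ T, aw P g := Finset.sum_erase_add T _ hfT
      have h7 : aw P s((some l : Option α), (none : Option α)) = P.p l l := rfl
      rw [tw]
      linarith [h6, h7.symm ▸ (rfl : aw P s((some l : Option α), (none : Option α))
        = aw P s((some l : Option α), (none : Option α)))]
    cases r with
    | some r' =>
      -- cross case: conclude directly
      have hfb : (q', r') ∈ barcs P := mem_apexEdges_somesome (hT.1 hfT)
      have hfedge : (q', r') ∈ P.edges := (Finset.mem_filter.1 hfb).1
      have hr'l : r' ∉ treeVerts F l := fun h => hrD (Finset.mem_image.2 ⟨r', h, rfl⟩)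
      obtain ⟨iroot, hiF, hri⟩ := exists_reach_root ⟨hfun, hacyc⟩ r'
      have hli : l ≠ iroot := fun h => hr'l (h ▸ mem_treeVerts_iff.2 hri)
      have hcb := crossBound l hlF iroot hiF hli q' hq'D r' (mem_treeVerts_iff.2 hri) hfedge
      -- zroots of T2
      have hzT2 : zroots (insert s((some l : Option α), (none : Option α))
          (T.erase s(some q', some r'))) = insert l (zroots T) := by
        ext i
        simp only [mem_zroots_iff, Finset.mem_insert, Finset.mem_erase]
        constructor
        · rintro (h | ⟨_, h⟩)
          · exact Or.inl (sym2_sn_iff.1 h)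
          · exact Or.inr h
        · rintro (rfl | h)
          · exact Or.inl rfl
          · exact Or.inr ⟨fun hEq => sym2_ss_ne_sn hEq.symm, h⟩
      have hdeg2 : (zroots (insert s((some l : Option α), (none : Option α))
          (T.erase s(some q', some r')))).card = k := by
        rw [hzT2, Finset.card_insert_of_notMem hlzT, hdeg]
        omega
      have hmin2 := minTrans _ hT2 hdeg2
      rw [htwT2] at hmin2
      have haw : aw P s((some q' : Option α), some r') = P.p q' r' := rfl
      rw [haw] at hmin2
      linarith
    | none =>
      -- apex case: recurse
      have hq'F : q' ∉ rootSet F := by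
        intro h
        have heq : q' = l := root_eq_of_mem_treeVerts h hlF hq'D
        exact heT (by rw [← heq]; exact hfT)
      have hq'zT : q' ∈ zroots T := mem_zroots_iff.2 hfT
      have hq'l : q' ≠ l := fun h => heT (h ▸ hfT)
      -- the rerooted tree T3 shows p l l ≤ p q' q'
      have hple : P.p l l ≤ P.p q' q' := by
        have heTA : s((some l : Option α), (none : Option α)) ∈ toApex F :=
          root_mem_toApex hlF
        have hfTA : s((some q' : Option α), (none : Option α)) ∉ toApex F := by
          intro h
          exact hq'F (by rw [← hzrF]; exact mem_zroots_iff.2 h)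
        have hT3sub : insert s((some q' : Option α), (none : Option α))
            ((toApex F).erase s((some l : Option α), (none : Option α))) ⊆ apexEdges P := by
          intro g hg
          rcases Finset.mem_insert.1 hg with rfl | hg
          · exact mem_apexEdges_apex q'
          · exact hTA.1 (Finset.mem_of_mem_erase hg)
        have hT3card : (insert s((some q' : Option α), (none : Option α))
            ((toApex F).erase s((some l : Option α), (none : Option α)))).card
            = Fintype.card α := by
          rw [Finset.card_insert_of_notMem (fun h => hfTA (Finset.mem_of_mem_erase h)),
            Finset.card_erase_of_mem heTA, hTA.2.2]
          have h1 : 1 ≤ (toApex F).card := Finset.card_pos.2 ⟨_, heTA⟩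
          rw [hTA.2.2] at h1
          omega
        have hconn3 : ∀ v, Reach (insert s((some q' : Option α), (none : Option α))
            ((toApex F).erase s((some l : Option α), (none : Option α)))) v none := by
          intro v
          have hsubins : (toApex F).erase s((some l : Option α), (none : Option α)) ⊆
              insert s((some q' : Option α), (none : Option α))
              ((toApex F).erase s((some l : Option α), (none : Option α))) :=
            Finset.subset_insert _ _
          cases v with
          | none => exact Relation.ReflTransGen.refl
          | some c =>
            obtain ⟨mroot, hmF, hcm⟩ := exists_reach_root ⟨hfun, hacyc⟩ c
            have base := (reach_toApex_erase (F := F) (l := l) hcm).mono hsubins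
            by_cases hml : mroot = l
            · subst hml
              have hq'm := (reach_toApex_erase (F := F) (l := mroot)
                (mem_treeVerts_iff.1 hq'D)).mono hsubins
              refine (base.trans hq'm.symm).trans ?_
              exact Relation.ReflTransGen.single (Finset.mem_insert_self _ _)
            · refine base.trans (Relation.ReflTransGen.single ?_)
              refine hsubins (Finset.mem_erase.2 ⟨?_, root_mem_toApex hmF⟩)
              exact fun hEq => hml (sym2_sn_iff.1 hEq)
        have hT3 : IsApexTree P _ := ⟨hT3sub, hconn3, hT3card⟩
        have hzT3 : zroots (insert s((some q' : Option α), (none : Option α))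
            ((toApex F).erase s((some l : Option α), (none : Option α))))
            = insert q' ((rootSet F).erase l) := by
          ext i
          simp only [mem_zroots_iff, Finset.mem_insert, Finset.mem_erase]
          constructor
          · rintro (h | ⟨hne, h⟩)
            · exact Or.inl (sym2_sn_iff.1 h)
            · refine Or.inr ⟨fun hEq => hne (by rw [hEq]), ?_⟩
              rw [← hzrF]
              exact mem_zroots_iff.2 h
          · rintro (rfl | ⟨hil, hiF⟩)
            · exact Or.inl rfl
            · refine Or.inr ⟨fun hEq => hil (sym2_sn_iff.1 hEq), ?_⟩
              exact mem_zroots_iff.1 (by rw [hzrF]; exact hiF)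
        have hdeg3 : (zroots (insert s((some q' : Option α), (none : Option α))
            ((toApex F).erase s((some l : Option α), (none : Option α))))).card = k := by
          rw [hzT3, Finset.card_insert_of_notMem
            (fun h => hq'F (Finset.mem_of_mem_erase h)),
            Finset.card_erase_of_mem hlF, hcardF]
          omega
        have hmin3 := minTrans _ hT3 hdeg3
        have htwT3 : tw P (insert s((some q' : Option α), (none : Option α))
            ((toApex F).erase s((some l : Option α), (none : Option α))))
            = tw P (toApex F) - P.p l l + P.p q' q' := by
          rw [tw, Finset.sum_insert (fun h => hfTA (Finset.mem_of_mem_erase h))]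
          have h6 : ∑ g ∈ (toApex F).erase s((some l : Option α), (none : Option α)), aw P g
              + aw P s((some l : Option α), (none : Option α))
              = ∑ g ∈ toApex F, aw P g := Finset.sum_erase_add _ _ heTA
          have h7 : aw P s((some l : Option α), (none : Option α)) = P.p l l := rfl
          have h8 : aw P s((some q' : Option α), (none : Option α)) = P.p q' q' := rfl
          rw [h8, tw]
          linarith [h6]
        rw [htwT3] at hmin3
        linarith
      -- zroots of T2 in the apex case
      have hzT2 : zroots (insert s((some l : Option α), (none : Option α))
          (T.erase s(some q', (none : Option α)))) = insert l ((zroots T).erase q') := by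
        ext i
        simp only [mem_zroots_iff, Finset.mem_insert, Finset.mem_erase]
        constructor
        · rintro (h | ⟨hne, h⟩)
          · exact Or.inl (sym2_sn_iff.1 h)
          · exact Or.inr ⟨fun hEq => hne (by rw [hEq]), h⟩
        · rintro (rfl | ⟨hiq, hiT⟩)
          · exact Or.inl rfl
          · exact Or.inr ⟨fun hEq => hiq (sym2_sn_iff.1 hEq), hiT⟩
      have hdeg2 : (zroots (insert s((some l : Option α), (none : Option α))
          (T.erase s(some q', (none : Option α))))).card = k - 1 := by
        rw [hzT2, Finset.card_insert_of_notMem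
          (fun h => hlzT (Finset.mem_of_mem_erase h)),
          Finset.card_erase_of_mem hq'zT, hdeg]
        have : 1 ≤ (zroots T).card := Finset.card_pos.2 ⟨q', hq'zT⟩
        omega
      have hmeas : rootSet F \ zroots (insert s((some l : Option α), (none : Option α))
          (T.erase s(some q', (none : Option α)))) = (rootSet F \ zroots T).erase l := by
        rw [hzT2]
        ext i
        simp only [Finset.mem_sdiff, Finset.mem_erase, Finset.mem_insert, Finset.mem_erase]
        constructor
        · rintro ⟨hiF, hnot⟩
          push_neg at hnot
          exact ⟨hnot.1, hiF, fun hiT => (hnot.2 (fun hEq => hq'F (hEq ▸ hiF)) hiT)⟩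
        · rintro ⟨hil, hiF, hiT⟩
          refine ⟨hiF, ?_⟩
          push_neg
          exact ⟨hil, fun _ => hiT⟩
      have hmlt : ((rootSet F \ zroots (insert s((some l : Option α), (none : Option α))
          (T.erase s(some q', (none : Option α))))).card) < m := by
        rw [hmeas, Finset.card_erase_of_mem hlmem, hm]
        have : 1 ≤ (rootSet F \ zroots T).card := Finset.card_pos.2 ⟨l, hlmem⟩
        omega
      have hrec := ih _ hmlt _ hT2 hdeg2 rfl
      rw [htwT2] at hrec
      have haw : aw P s((some q' : Option α), (none : Option α)) = P.p q' q' := rfl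
      rw [haw] at hrec
      linarith
  intro T hT hdeg
  exact main _ T hT hdeg rfl

end LowerBound

/-- Let `F ∈ 𝓕̃^k` (`k ≥ 2`) be a minimal spanning entering forest
of the barrier digraph of `P`, let `(y,x)` be a minimum-weight arc of the enlarged
barrier digraph `V^k`, and let `(a,b)` be an edge of `P` with `a ∈ V(T^F_y)`,
`b ∈ V(T^F_x)` realizing the minimal barrier between `V(T^F_y)` and `V(T^F_x)`.
If `G` is obtained from `F` by reorienting the tree `T^F_y` so that its root becomes
`a` (i.e. replacing `T^F_y` by the entering tree `T'` with root `a` on the same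
undirected edges) and adding the arc `(a,b)`, then `G ∈ 𝓕̃^{k-1} ∩ 𝓡^F_y` and
`Υ^G = Υ^F + p a b - p y y`. -/
theorem statement17 (P : PotGraph α) (k : ℕ) (hk : 2 ≤ k)
    (F : Finset (α × α)) (hF : IsMinForest (bw P) (barcs P) k F)
    (y x : α) (hy : y ∈ rootSet F) (hx : x ∈ rootSet F) (hyx : y ≠ x)
    (hedge : ∃ e : α × α, e.1 ∈ treeVerts F y ∧ e.2 ∈ treeVerts F x ∧ e ∈ P.edges)
    (hminarc : ∀ l ∈ rootSet F, ∀ i ∈ rootSet F, l ≠ i →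
      crossMin P F y x - ((P.p y y : ℝ) : EReal) ≤ crossMin P F l i - ((P.p l l : ℝ) : EReal))
    (a b : α) (ha : a ∈ treeVerts F y) (hb : b ∈ treeVerts F x) (hab : (a, b) ∈ P.edges)
    (habmin : ∀ q ∈ treeVerts F y, ∀ r ∈ treeVerts F x, (q, r) ∈ P.edges → P.p a b ≤ P.p q r)
    (T' : Finset (α × α)) (hT' : IsTreeOn (barcs P) T' (treeVerts F y) a)
    (hT'edges : undir T' = undir (treeArcs F y))
    (G : Finset (α × α)) (hG : G = (F \ treeArcs F y) ∪ T' ∪ {(a, b)}) :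
    IsMinForest (bw P) (barcs P) (k - 1) G ∧ IsDescendant (barcs P) F G y ∧
      aweight (bw P) G = aweight (bw P) F + P.p a b - P.p y y := by
  classical
  obtain ⟨hFset, hFphi⟩ := hF
  obtain ⟨hGset, hroots, hrestr, hrestry, hweight0⟩ :=
    G_structure hFset hy hx hyx ha hb hab hT' hG
  -- the weight equation
  have htA := treeArcs_isTreeOn hFset.2.1 hFset.1 hy
  have w1 := tree_weight P hT'.funct hT'.acyclic hT'.image_fst
  have w2 := tree_weight P htA.funct htA.acyclic htA.image_fst
  have hsums : ∑ e ∈ undir T', Sym2.lift ⟨P.p, P.symm_w⟩ e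
      = ∑ e ∈ undir (treeArcs F y), Sym2.lift ⟨P.p, P.symm_w⟩ e := by rw [hT'edges]
  have hyS : y ∈ treeVerts F y := root_mem_treeVerts hy
  have e1 : ∑ i ∈ (treeVerts F y).erase y, P.p i i + P.p y y
      = ∑ i ∈ treeVerts F y, P.p i i := Finset.sum_erase_add _ _ hyS
  have e2 : ∑ i ∈ (treeVerts F y).erase a, P.p i i + P.p a a
      = ∑ i ∈ treeVerts F y, P.p i i := Finset.sum_erase_add _ _ ha
  have hweight : aweight (bw P) G = aweight (bw P) F + P.p a b - P.p y y := by
    rw [hweight0, w1, w2]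
    linarith
  -- minimality
  have hk1 : 1 ≤ k := by omega
  have lb := tw_lower_bound ⟨hFset, hFphi⟩ hk1 hy hx hyx hminarc ha hb hab habmin
  obtain ⟨_, _, htwF⟩ := toApex_isApexTree hFset
  have lower : ∀ A ∈ FSet (barcs P) (k - 1), aweight (bw P) G ≤ aweight (bw P) A := by
    intro A hA
    obtain ⟨hTA', hzrA, htwA⟩ := toApex_isApexTree hA
    have h1 := lb (toApex A) hTA' (by rw [hzrA]; exact hA.2.2)
    rw [htwF, htwA] at h1
    linarith
  have hphiG : ((aweight (bw P) G : ℝ) : EReal) = phi (bw P) (barcs P) (k - 1) := by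
    refine le_antisymm ?_ (sInf_le ⟨G, hGset, rfl⟩)
    apply le_sInf
    rintro w ⟨A, hA, rfl⟩
    exact EReal.coe_le_coe_iff.2 (lower A hA)
  refine ⟨⟨hGset, hphiG⟩, ⟨hy, hroots, hrestr, ⟨a, ha, ?_⟩⟩, hweight⟩
  rw [hrestry]
  exact hT'

end BarrierForests
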